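/- Let L be an invertible d×d real matrix, let x ∈ ℝ^d, set x̄ = L⁻¹x, and let α ∈ ℝ satisfy 1 + α‖x̄‖² = √(1 + ‖x̄‖²), where ‖·‖ is the Euclidean norm. Then the matrix L' = L(I + α x̄ x̄ᵀ) satisfies L' L'ᵀ = L Lᵀ + x xᵀ; that is, L' is a symmetric (Cholesky-style) factor of the rank-one update of L Lᵀ. -/

import Mathlib

open Matrix

/-- Rank-one symmetric (Cholesky-style) factor update: if `x̄ = L⁻¹ x` and
`α` satisfies `1 + α‖x̄‖² = √(1 + ‖x̄‖²)`, then `L' = L (I + α x̄ x̄ᵀ)`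
satisfies `L' L'ᵀ = L Lᵀ + x xᵀ`. -/
theorem rank_one_cholesky_factor_update
    (d : ℕ) (L : Matrix (Fin d) (Fin d) ℝ) (hL : IsUnit L.det)
    (x : Fin d → ℝ) (xbar : Fin d → ℝ) (hxbar : xbar = L⁻¹ *ᵥ x)
    (α : ℝ)
    (hα : 1 + α * (xbar ⬝ᵥ xbar) = Real.sqrt (1 + xbar ⬝ᵥ xbar)) :
    (L * (1 + α • vecMulVec xbar xbar)) * (L * (1 + α • vecMulVec xbar xbar))ᵀ
      = L * Lᵀ + vecMulVec x x := by
  set s : ℝ := xbar ⬝ᵥ xbar with hs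
  set W : Matrix (Fin d) (Fin d) ℝ := vecMulVec xbar xbar with hWdef
  have hs0 : (0:ℝ) ≤ s := by
    simpa [hs, dotProduct] using Finset.sum_nonneg fun i _ => mul_self_nonneg (xbar i)
  have hsq : (1 + α * s) ^ 2 = 1 + s := by
    rw [hα]; exact Real.sq_sqrt (by linarith)
  have hkey : s * (2 * α + α ^ 2 * s) = s := by nlinarith [hsq]
  -- x = L *ᵥ xbar
  have hx : x = L *ᵥ xbar := by
    rw [hxbar, mulVec_mulVec, Matrix.mul_nonsing_inv L hL, one_mulVec]
  have hWT : Wᵀ = W := by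
    ext i j; simp [hWdef, vecMulVec_apply, mul_comm]
  have hWW : W * W = s • W := by
    ext i j
    simp only [hWdef, mul_apply, vecMulVec_apply, Matrix.smul_apply, smul_eq_mul, hs, dotProduct]
    rw [Finset.sum_mul]
    apply Finset.sum_congr rfl
    intro k _; ring
  have hLWL : L * W * Lᵀ = vecMulVec x x := by
    rw [hx]
    ext i j
    simp only [hWdef, mul_apply, vecMulVec_apply, transpose_apply, mulVec, dotProduct,
      Finset.sum_mul, Finset.mul_sum]
    apply Finset.sum_congr rfl
    intro k _
    apply Finset.sum_congr rfl
    intro l _; ring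
  have hscale : (2 * α + α ^ 2 * s) • W = W := by
    by_cases h0 : s = 0
    · have hz : xbar = 0 := by
        rwa [hs, dotProduct_self_eq_zero] at h0
      ext i j
      simp [hWdef, hz, vecMulVec_apply]
    · have hc : 2 * α + α ^ 2 * s = 1 :=
        mul_left_cancel₀ h0 (hkey.trans (mul_one s).symm)
      rw [hc, one_smul]
  have hM : (1 + α • W) * (1 + α • W) = 1 + W := by
    have : (1 + α • W) * (1 + α • W)
        = 1 + (2 * α) • W + α ^ 2 • (W * W) := by
      simp only [add_mul, mul_add, one_mul, mul_one, smul_mul_smul_comm]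
      module
    rw [this, hWW, smul_smul]
    rw [show (1 : Matrix (Fin d) (Fin d) ℝ) + (2*α) • W + (α^2 * s) • W
        = 1 + (2*α + α^2*s) • W by module, hscale]
  calc (L * (1 + α • W)) * (L * (1 + α • W))ᵀ
      = L * ((1 + α • W) * (1 + α • W)) * Lᵀ := by
        rw [transpose_mul, transpose_add, transpose_one, transpose_smul, hWT]
        noncomm_ring
    _ = L * (1 + W) * Lᵀ := by rw [hM]
    _ = L * Lᵀ + vecMulVec x x := by
        rw [mul_add, mul_one, add_mul, hLWL]
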